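/- Let T ⊆ ℚ be a nonempty bounded semilinear set such that T ∩ (−ε, ε) = ∅ for some rational ε > 0. Then for every rational δ > 0 there exist finitely many nonzero rationals c₁, …, c_m such that the set V = c₁·T ∩ … ∩ c_m·T satisfies either (1 ∈ V and V ⊆ (1−δ, 1+δ)) or ({−1, 1} ⊆ V and V ⊆ (−1−δ, −1+δ) ∪ (1−δ, 1+δ)). -/

import Mathlib

/-- A linear set in ℚ^n: the solution set of a finite conjunction of linear
inequalities `c₁x₁+…+cₙxₙ ≤ b` or `c₁x₁+…+cₙxₙ < b` with rational coefficients. -/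
def IsLinearSetQ (n : ℕ) (S : Set (Fin n → ℚ)) : Prop :=
  ∃ (m : ℕ) (c : Fin m → Fin n → ℚ) (b : Fin m → ℚ) (strict : Fin m → Bool),
    S = {x | ∀ i, if strict i then (∑ j, c i j * x j) < b i else (∑ j, c i j * x j) ≤ b i}

/-- A semilinear set: a finite union of linear sets. -/
def IsSemilinear (n : ℕ) (S : Set (Fin n → ℚ)) : Prop :=
  ∃ (k : ℕ) (f : Fin k → Set (Fin n → ℚ)), (∀ i, IsLinearSetQ n (f i)) ∧ S = ⋃ i, f i

/-- A unary semilinear relation: a semilinear subset of ℚ. -/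
def IsSemilinear1 (U : Set ℚ) : Prop :=
  IsSemilinear 1 {v : Fin 1 → ℚ | v 0 ∈ U}

/-- A set U ⊆ ℚ is bounded if U ⊆ [−a, a] for some a ∈ ℚ. -/
def BoundedSet (U : Set ℚ) : Prop := ∃ a : ℚ, U ⊆ Set.Icc (-a) a

/-- c·U = {c·x | x ∈ U}. -/
def scaleSet (c : ℚ) (U : Set ℚ) : Set ℚ := (fun x => c * x) '' U

lemma stmt10_pieces (T : Set ℚ) (hT : IsSemilinear1 T) :
    ∃ (k : ℕ) (g : Fin k → Set ℚ),
      (∀ i, ∀ x y z : ℚ, x ∈ g i → z ∈ g i → x ≤ y → y ≤ z → y ∈ g i) ∧ T = ⋃ i, g i := by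
  obtain ⟨k, f, hlin, hU⟩ := hT
  refine ⟨k, fun i => {q : ℚ | (fun _ : Fin 1 => q) ∈ f i}, ?_, ?_⟩
  · intro i x y z hx hz hxy hyz
    obtain ⟨m, c, b, strict, hS⟩ := hlin i
    simp only [Set.mem_setOf_eq, hS] at hx hz ⊢
    intro j
    have hx' := hx j
    have hz' := hz j
    simp only [Fin.sum_univ_one] at hx' hz' ⊢
    rcases le_total (c j 0) 0 with hc | hc
    · have h1 : c j 0 * y ≤ c j 0 * x := mul_le_mul_of_nonpos_left hxy hc
      cases hst : strict j <;> simp only [hst] at hx' hz' ⊢ <;> simp_all <;> linarith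
    · have h1 : c j 0 * y ≤ c j 0 * z := mul_le_mul_of_nonneg_left hyz hc
      cases hst : strict j <;> simp only [hst] at hx' hz' ⊢ <;> simp_all <;> linarith
  · ext q
    have h1 : q ∈ T ↔ (fun _ : Fin 1 => q) ∈ {v : Fin 1 → ℚ | v 0 ∈ T} := Iff.rfl
    rw [h1, hU]
    simp [Set.mem_iUnion]

lemma stmt10_absorb_top {k : ℕ} {g : Fin k → Set ℚ}
    (hg : ∀ i, ∀ x y z : ℚ, x ∈ g i → z ∈ g i → x ≤ y → y ≤ z → y ∈ g i)
    {W : Set ℚ} (hW : W = ⋃ i, g i) {σ : ℝ}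
    (happ : ∀ γ : ℚ, 0 < γ → ∃ w, w ∈ W ∧ σ - γ < (w : ℝ) ∧ (w : ℝ) < σ) :
    ∃ w₁, w₁ ∈ W ∧ (w₁ : ℝ) < σ ∧ ∀ q : ℚ, w₁ ≤ q → (q : ℝ) < σ → q ∈ W := by
  have key : ∃ i, ∀ γ : ℚ, 0 < γ → ∃ w, w ∈ g i ∧ σ - γ < (w : ℝ) ∧ (w : ℝ) < σ := by
    by_contra hcon
    push_neg at hcon
    choose γf hγf hbad using hcon
    rcases Nat.eq_zero_or_pos k with hk | hk
    · obtain ⟨w, hwW, _, _⟩ := happ 1 one_pos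
      rw [hW] at hwW
      subst hk
      simpa using hwW
    · have hne : (Finset.univ : Finset (Fin k)).Nonempty := by
        have : Nonempty (Fin k) := Fin.pos_iff_nonempty.mp hk
        exact Finset.univ_nonempty
      set γm := Finset.univ.inf' hne γf with hγm
      have hγm0 : 0 < γm := by
        rw [hγm, Finset.lt_inf'_iff]
        intro i _
        exact hγf i
      obtain ⟨w, hwW, hw1, hw2⟩ := happ γm hγm0
      rw [hW] at hwW
      obtain ⟨i, hwi⟩ := Set.mem_iUnion.mp hwW
      have hle : γm ≤ γf i := Finset.inf'_le _ (Finset.mem_univ i)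
      have := hbad i w hwi (by
        have : (γm : ℝ) ≤ (γf i : ℝ) := by exact_mod_cast hle
        linarith)
      linarith
  obtain ⟨i, hi⟩ := key
  obtain ⟨w₁, hw₁g, _, hw₁σ⟩ := hi 1 one_pos
  refine ⟨w₁, hW ▸ Set.mem_iUnion.mpr ⟨i, hw₁g⟩, hw₁σ, ?_⟩
  intro q hq hqσ
  obtain ⟨γ', hγ'1, hγ'2⟩ := exists_rat_btwn (show (0:ℝ) < σ - q by linarith)
  have hγ'0 : 0 < γ' := by exact_mod_cast hγ'1
  obtain ⟨w₂, hw₂g, hw₂1, _⟩ := hi γ' hγ'0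
  have hqw₂ : q ≤ w₂ := by
    have : (q : ℝ) < (w₂ : ℝ) := by linarith
    exact_mod_cast this.le
  exact hW ▸ Set.mem_iUnion.mpr ⟨i, hg i w₁ q w₂ hw₁g hw₂g hq hqw₂⟩

lemma stmt10_absorb_bot {k : ℕ} {g : Fin k → Set ℚ}
    (hg : ∀ i, ∀ x y z : ℚ, x ∈ g i → z ∈ g i → x ≤ y → y ≤ z → y ∈ g i)
    {W : Set ℚ} (hW : W = ⋃ i, g i) {ι : ℝ}
    (happ : ∀ γ : ℚ, 0 < γ → ∃ w, w ∈ W ∧ ι < (w : ℝ) ∧ (w : ℝ) < ι + γ) :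
    ∃ w₁, w₁ ∈ W ∧ ι < (w₁ : ℝ) ∧ ∀ q : ℚ, q ≤ w₁ → ι < (q : ℝ) → q ∈ W := by
  have key : ∃ i, ∀ γ : ℚ, 0 < γ → ∃ w, w ∈ g i ∧ ι < (w : ℝ) ∧ (w : ℝ) < ι + γ := by
    by_contra hcon
    push_neg at hcon
    choose γf hγf hbad using hcon
    rcases Nat.eq_zero_or_pos k with hk | hk
    · obtain ⟨w, hwW, _, _⟩ := happ 1 one_pos
      rw [hW] at hwW
      subst hk
      simpa using hwW
    · have hne : (Finset.univ : Finset (Fin k)).Nonempty := by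
        have : Nonempty (Fin k) := Fin.pos_iff_nonempty.mp hk
        exact Finset.univ_nonempty
      set γm := Finset.univ.inf' hne γf with hγm
      have hγm0 : 0 < γm := by
        rw [hγm, Finset.lt_inf'_iff]
        intro i _
        exact hγf i
      obtain ⟨w, hwW, hw1, hw2⟩ := happ γm hγm0
      rw [hW] at hwW
      obtain ⟨i, hwi⟩ := Set.mem_iUnion.mp hwW
      have hle : γm ≤ γf i := Finset.inf'_le _ (Finset.mem_univ i)
      have := hbad i w hwi hw1
      have hcast : (γm : ℝ) ≤ (γf i : ℝ) := by exact_mod_cast hle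
      linarith
  obtain ⟨i, hi⟩ := key
  obtain ⟨w₁, hw₁g, hw₁ι, _⟩ := hi 1 one_pos
  refine ⟨w₁, hW ▸ Set.mem_iUnion.mpr ⟨i, hw₁g⟩, hw₁ι, ?_⟩
  intro q hq hqι
  obtain ⟨γ', hγ'1, hγ'2⟩ := exists_rat_btwn (show (0:ℝ) < q - ι by linarith)
  have hγ'0 : 0 < γ' := by exact_mod_cast hγ'1
  obtain ⟨w₂, hw₂g, _, hw₂2⟩ := hi γ' hγ'0
  have hqw₂ : w₂ ≤ q := by
    have : (w₂ : ℝ) < (q : ℝ) := by linarith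
    exact_mod_cast this.le
  exact hW ▸ Set.mem_iUnion.mpr ⟨i, hg i w₂ q w₁ hw₂g hw₁g hqw₂ hq⟩

/-- kill statement abbreviation -/
def KillStmt (T : Set ℚ) : Prop :=
  ∃ d₀ : ℚ, 0 < d₀ ∧ ∃ t₁ t₂ : ℚ, t₁ ∈ T ∧ t₂ ∈ T ∧
    ∀ x : ℚ, x < 0 → 1 < (-x) * (1 + d₀) → (-x) < 1 + d₀ →
      x * t₁ ∈ T → x * t₂ ∈ T → False

lemma stmt10_single_top (T : Set ℚ) (a : ℚ) (ha : 0 < a) (σ : ℝ) (hσa : σ ≤ (a : ℝ))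
    (X Y : Set ℚ) (pX : ℚ → ℚ)
    (hXpos : ∀ s ∈ X, (0 : ℚ) < s)
    (hprobe : ∀ s ∈ X, pX s ∈ T)
    (hland : ∀ s x : ℚ, s ∈ X → x < 0 → x * pX s ∈ T → (-x) * s ∈ Y)
    (γ : ℚ) (hγ : 0 < γ)
    (hgap : ∀ w ∈ Y, (w : ℝ) ≤ σ - γ ∨ (w : ℝ) = σ)
    (hnat : ¬ ∃ w ∈ Y, (w : ℝ) = σ)
    (r : ℚ) (hr : r ∈ X) (hr1 : σ - γ/2 < (r : ℝ)) (hr2 : (r : ℝ) ≤ σ) :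
    KillStmt T := by
  refine ⟨γ/(2*(a+1)), by positivity, pX r, pX r, hprobe r hr, hprobe r hr, ?_⟩
  intro x hx h1 h2 ht _
  set d₀ := γ/(2*(a+1)) with hd
  have hd0 : 0 < d₀ := by positivity
  have hq : (-x) * r ∈ Y := hland r x hr hx ht
  have hqσ : (((-x) * r : ℚ) : ℝ) ≤ σ - γ := by
    rcases hgap _ hq with h | h
    · exact h
    · exact absurd ⟨_, hq, h⟩ hnat
  have hrpos : 0 < r := hXpos r hr
  have hy : 0 < -x := by linarith
  have hQpos : 0 < (-x) * r := mul_pos hy hrpos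
  have hk : r < ((-x) * r) * (1 + d₀) := by nlinarith
  -- move to ℝ
  have hkR : (r : ℝ) < (((-x) * r : ℚ) : ℝ) * (1 + (d₀ : ℝ)) := by exact_mod_cast hk
  have hQposR : (0 : ℝ) < (((-x) * r : ℚ) : ℝ) := by exact_mod_cast hQpos
  have hdR : (d₀ : ℝ) * (2 * ((a : ℝ) + 1)) = (γ : ℝ) := by
    rw [hd]; push_cast; field_simp
  have hd0R : (0 : ℝ) < (d₀ : ℝ) := by exact_mod_cast hd0
  have hγR : (0 : ℝ) < (γ : ℝ) := by exact_mod_cast hγ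
  have haR : (0 : ℝ) < (a : ℝ) := by exact_mod_cast ha
  set Q : ℝ := (((-x) * r : ℚ) : ℝ)
  -- Q ≤ σ - γ, r < Q(1+d), σ - γ/2 < r
  have key : Q * (1 + (d₀:ℝ)) ≤ (σ - γ) * (1 + (d₀:ℝ)) :=
    mul_le_mul_of_nonneg_right hqσ (by linarith)
  have key2 : (σ - γ) * (d₀:ℝ) ≤ (a : ℝ) * (d₀:ℝ) :=
    mul_le_mul_of_nonneg_right (by linarith) hd0R.le
  nlinarith [key, key2, hdR, hkR, hr1]

lemma stmt10_double_top (T : Set ℚ) (a : ℚ) (ha : 0 < a) (σ : ℝ) (hσa : σ ≤ (a : ℝ))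
    (X Y : Set ℚ) (pX pY : ℚ → ℚ)
    (hXpos : ∀ s ∈ X, (0 : ℚ) < s) (hYpos : ∀ s ∈ Y, (0 : ℚ) < s)
    (hprobeX : ∀ s ∈ X, pX s ∈ T) (hprobeY : ∀ s ∈ Y, pY s ∈ T)
    (hlandX : ∀ s x : ℚ, s ∈ X → x < 0 → x * pX s ∈ T → (-x) * s ∈ Y)
    (hlandY : ∀ s x : ℚ, s ∈ Y → x < 0 → x * pY s ∈ T → (-x) * s ∈ X)
    (γ : ℚ) (hγ : 0 < γ)
    (hgapX : ∀ w ∈ X, (w : ℝ) ≤ σ - γ ∨ (w : ℝ) = σ)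
    (w₀ : ℚ) (hw₀ : w₀ ∈ X) (hw₀σ : (w₀ : ℝ) = σ)
    (hnatY : ¬ ∃ w ∈ Y, (w : ℝ) = σ)
    (hubY : ∀ w ∈ Y, (w : ℝ) ≤ σ)
    (s : ℚ) (hs : s ∈ Y) (hs1 : σ - γ/2 < (s : ℝ)) (hs2 : (s : ℝ) < σ) :
    KillStmt T := by
  refine ⟨γ/(2*(a+1)), by positivity, pX w₀, pY s, hprobeX w₀ hw₀, hprobeY s hs, ?_⟩
  intro x hx h1 h2 ht₁ ht₂
  set d₀ := γ/(2*(a+1)) with hd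
  have hd0 : 0 < d₀ := by positivity
  have hy : 0 < -x := by linarith
  have hw₀pos : 0 < w₀ := hXpos w₀ hw₀
  have hspos : 0 < s := hYpos s hs
  -- (i): y < 1
  have hq₁ : (-x) * w₀ ∈ Y := hlandX w₀ x hw₀ hx ht₁
  have hq₁σ : (((-x) * w₀ : ℚ) : ℝ) < σ := by
    rcases (hubY _ hq₁).lt_or_eq with h | h
    · exact h
    · exact absurd ⟨_, hq₁, h⟩ hnatY
  have hylt1 : -x < 1 := by
    have : (((-x) * w₀ : ℚ) : ℝ) < ((w₀ : ℚ) : ℝ) := by rw [hw₀σ]; exact hq₁σ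
    have h' : (-x) * w₀ < w₀ := by exact_mod_cast this
    nlinarith
  -- (ii): contradiction at s
  have hq₂ : (-x) * s ∈ X := hlandY s x hs hx ht₂
  have hq₂lt : (-x) * s < s := by nlinarith
  have hq₂σ : (((-x) * s : ℚ) : ℝ) ≤ σ - γ := by
    rcases hgapX _ hq₂ with h | h
    · exact h
    · exfalso
      have : (((-x) * s : ℚ) : ℝ) < (s : ℝ) := by exact_mod_cast hq₂lt
      rw [h] at this
      linarith
  have hQpos : 0 < (-x) * s := mul_pos hy hspos
  have hk : s < ((-x) * s) * (1 + d₀) := by nlinarith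
  have hkR : (s : ℝ) < (((-x) * s : ℚ) : ℝ) * (1 + (d₀ : ℝ)) := by exact_mod_cast hk
  have hdR : (d₀ : ℝ) * (2 * ((a : ℝ) + 1)) = (γ : ℝ) := by
    rw [hd]; push_cast; field_simp
  have hd0R : (0 : ℝ) < (d₀ : ℝ) := by exact_mod_cast hd0
  have hγR : (0 : ℝ) < (γ : ℝ) := by exact_mod_cast hγ
  have haR : (0 : ℝ) < (a : ℝ) := by exact_mod_cast ha
  have hQposR : (0 : ℝ) < (((-x) * s : ℚ) : ℝ) := by exact_mod_cast hQpos
  have key : (((-x) * s : ℚ) : ℝ) * (1 + (d₀:ℝ)) ≤ (σ - γ) * (1 + (d₀:ℝ)) :=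
    mul_le_mul_of_nonneg_right hq₂σ (by linarith)
  have key2 : (σ - γ) * (d₀:ℝ) ≤ (a : ℝ) * (d₀:ℝ) :=
    mul_le_mul_of_nonneg_right (by linarith) hd0R.le
  nlinarith [key, key2, hdR, hkR, hs1]

lemma stmt10_single_bot (T : Set ℚ) (a : ℚ) (ha : 0 < a) (ι : ℝ) (hιa : ι ≤ (a : ℝ))
    (hι0 : 0 < ι)
    (X Y : Set ℚ) (pX : ℚ → ℚ)
    (hXpos : ∀ s ∈ X, (0 : ℚ) < s)
    (hprobe : ∀ s ∈ X, pX s ∈ T)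
    (hland : ∀ s x : ℚ, s ∈ X → x < 0 → x * pX s ∈ T → (-x) * s ∈ Y)
    (γ : ℚ) (hγ : 0 < γ)
    (hgap : ∀ w ∈ Y, ι + γ ≤ (w : ℝ) ∨ (w : ℝ) = ι)
    (hnat : ¬ ∃ w ∈ Y, (w : ℝ) = ι)
    (r : ℚ) (hr : r ∈ X) (hr1 : (r : ℝ) < ι + γ/2) (hr2 : ι ≤ (r : ℝ)) :
    KillStmt T := by
  refine ⟨γ/(2*a+γ), by positivity, pX r, pX r, hprobe r hr, hprobe r hr, ?_⟩
  intro x hx h1 h2 ht _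
  set d₀ := γ/(2*a+γ) with hd
  have hd0 : 0 < d₀ := by positivity
  have hq : (-x) * r ∈ Y := hland r x hr hx ht
  have hqι : ι + γ ≤ (((-x) * r : ℚ) : ℝ) := by
    rcases hgap _ hq with h | h
    · exact h
    · exact absurd ⟨_, hq, h⟩ hnat
  have hrpos : 0 < r := hXpos r hr
  have hy : 0 < -x := by linarith
  have hk : ((-x) * r) < (1 + d₀) * r := by nlinarith
  have hkR : (((-x) * r : ℚ) : ℝ) < (1 + (d₀ : ℝ)) * (r : ℝ) := by exact_mod_cast hk
  have hdR : (d₀ : ℝ) * (2 * (a : ℝ) + (γ : ℝ)) = (γ : ℝ) := by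
    rw [hd]; push_cast; field_simp
  have hd0R : (0 : ℝ) < (d₀ : ℝ) := by exact_mod_cast hd0
  have hγR : (0 : ℝ) < (γ : ℝ) := by exact_mod_cast hγ
  have haR : (0 : ℝ) < (a : ℝ) := by exact_mod_cast ha
  have key : (1 + (d₀:ℝ)) * (r : ℝ) < (1 + (d₀:ℝ)) * (ι + γ/2) := by
    apply mul_lt_mul_of_pos_left hr1 (by linarith)
  have key2 : (d₀:ℝ) * ι ≤ (d₀:ℝ) * (a : ℝ) := mul_le_mul_of_nonneg_left hιa hd0R.le
  nlinarith [key, key2, hdR, hkR, hqι]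

lemma stmt10_double_bot (T : Set ℚ) (a : ℚ) (ha : 0 < a) (ι : ℝ) (hιa : ι ≤ (a : ℝ))
    (hι0 : 0 < ι)
    (X Y : Set ℚ) (pX pY : ℚ → ℚ)
    (hXpos : ∀ s ∈ X, (0 : ℚ) < s) (hYpos : ∀ s ∈ Y, (0 : ℚ) < s)
    (hprobeX : ∀ s ∈ X, pX s ∈ T) (hprobeY : ∀ s ∈ Y, pY s ∈ T)
    (hlandX : ∀ s x : ℚ, s ∈ X → x < 0 → x * pX s ∈ T → (-x) * s ∈ Y)
    (hlandY : ∀ s x : ℚ, s ∈ Y → x < 0 → x * pY s ∈ T → (-x) * s ∈ X)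
    (γ : ℚ) (hγ : 0 < γ)
    (hgapX : ∀ w ∈ X, ι + γ ≤ (w : ℝ) ∨ (w : ℝ) = ι)
    (w₀ : ℚ) (hw₀ : w₀ ∈ X) (hw₀ι : (w₀ : ℝ) = ι)
    (hnatY : ¬ ∃ w ∈ Y, (w : ℝ) = ι)
    (hlbY : ∀ w ∈ Y, ι ≤ (w : ℝ))
    (s : ℚ) (hs : s ∈ Y) (hs1 : (s : ℝ) < ι + γ/2) (hs2 : ι < (s : ℝ)) :
    KillStmt T := by
  refine ⟨γ/(2*a+γ), by positivity, pX w₀, pY s, hprobeX w₀ hw₀, hprobeY s hs, ?_⟩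
  intro x hx h1 h2 ht₁ ht₂
  set d₀ := γ/(2*a+γ) with hd
  have hd0 : 0 < d₀ := by positivity
  have hy : 0 < -x := by linarith
  have hw₀pos : 0 < w₀ := hXpos w₀ hw₀
  have hspos : 0 < s := hYpos s hs
  -- (i): 1 < y
  have hq₁ : (-x) * w₀ ∈ Y := hlandX w₀ x hw₀ hx ht₁
  have hq₁ι : ι < (((-x) * w₀ : ℚ) : ℝ) := by
    rcases (hlbY _ hq₁).lt_or_eq with h | h
    · exact h
    · exact absurd ⟨_, hq₁, h.symm⟩ hnatY
  have hygt1 : 1 < -x := by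
    have : ((w₀ : ℚ) : ℝ) < (((-x) * w₀ : ℚ) : ℝ) := by rw [hw₀ι]; exact hq₁ι
    have h' : w₀ < (-x) * w₀ := by exact_mod_cast this
    nlinarith
  -- (ii)
  have hq₂ : (-x) * s ∈ X := hlandY s x hs hx ht₂
  have hq₂gt : s < (-x) * s := by nlinarith
  have hq₂gtR : (s : ℝ) < (((-x) * s : ℚ) : ℝ) := by exact_mod_cast hq₂gt
  have hq₂ι : ι + γ ≤ (((-x) * s : ℚ) : ℝ) := by
    rcases hgapX _ hq₂ with h | h
    · exact h
    · exfalso; rw [h] at hq₂gtR; linarith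
  have hk : ((-x) * s) < (1 + d₀) * s := by nlinarith
  have hkR : (((-x) * s : ℚ) : ℝ) < (1 + (d₀ : ℝ)) * (s : ℝ) := by exact_mod_cast hk
  have hdR : (d₀ : ℝ) * (2 * (a : ℝ) + (γ : ℝ)) = (γ : ℝ) := by
    rw [hd]; push_cast; field_simp
  have hd0R : (0 : ℝ) < (d₀ : ℝ) := by exact_mod_cast hd0
  have hγR : (0 : ℝ) < (γ : ℝ) := by exact_mod_cast hγ
  have haR : (0 : ℝ) < (a : ℝ) := by exact_mod_cast ha
  have key : (1 + (d₀:ℝ)) * (s : ℝ) < (1 + (d₀:ℝ)) * (ι + γ/2) := by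
    apply mul_lt_mul_of_pos_left hs1 (by linarith)
  have key2 : (d₀:ℝ) * ι ≤ (d₀:ℝ) * (a : ℝ) := mul_le_mul_of_nonneg_left hιa hd0R.le
  nlinarith [key, key2, hdR, hkR, hq₂ι]

set_option maxHeartbeats 2000000 in
/-- Let T ⊆ ℚ be a nonempty bounded semilinear set with T ∩ (−ε,ε) = ∅ for some
rational ε > 0.  Then for every rational δ > 0 there are finitely many nonzero
rationals c₁, …, c_m such that V = c₁·T ∩ … ∩ c_m·T satisfies either
(1 ∈ V and V ⊆ (1−δ,1+δ)) or ({−1,1} ⊆ V and V ⊆ (−1−δ,−1+δ) ∪ (1−δ,1+δ)). -/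
theorem stmt10 (T : Set ℚ) (hT : IsSemilinear1 T) (hne : T.Nonempty)
    (hb : BoundedSet T)
    (ε : ℚ) (hε : 0 < ε) (hdisj : T ∩ Set.Ioo (-ε) ε = ∅)
    (δ : ℚ) (hδ : 0 < δ) :
    ∃ (m : ℕ) (c : Fin m → ℚ), (∀ i, c i ≠ 0) ∧
      (((1 : ℚ) ∈ ⋂ i, scaleSet (c i) T ∧
          (⋂ i, scaleSet (c i) T) ⊆ Set.Ioo (1 - δ) (1 + δ)) ∨
       (({-1, 1} : Set ℚ) ⊆ ⋂ i, scaleSet (c i) T ∧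
          (⋂ i, scaleSet (c i) T) ⊆
            Set.Ioo (-1 - δ) (-1 + δ) ∪ Set.Ioo (1 - δ) (1 + δ))) := by
  classical
  obtain ⟨a, haIcc⟩ := hb
  have hnotIoo : ∀ t ∈ T, ¬((-ε) < t ∧ t < ε) := by
    intro t ht h
    have : t ∈ T ∩ Set.Ioo (-ε) ε := ⟨ht, h⟩
    rw [hdisj] at this
    exact this
  have hT0 : (0 : ℚ) ∉ T := fun h0 => hnotIoo 0 h0 ⟨by linarith, hε⟩
  set A : Set ℚ := {q | 0 < q ∧ q ∈ T} with hA
  set B : Set ℚ := {q | 0 < q ∧ -q ∈ T} with hB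
  set UU : Set ℚ := {q | 0 < q ∧ (q ∈ T ∨ -q ∈ T)} with hUUdef
  have hAUU : ∀ q ∈ A, q ∈ UU := fun q hq => ⟨hq.1, Or.inl hq.2⟩
  have hBUU : ∀ q ∈ B, q ∈ UU := fun q hq => ⟨hq.1, Or.inr hq.2⟩
  have hUε : ∀ z ∈ UU, ε ≤ z := by
    rintro z ⟨hz0, hz⟩
    rcases hz with h | h
    · by_contra hlt
      push_neg at hlt
      exact hnotIoo z h ⟨by linarith, hlt⟩
    · by_contra hlt
      push_neg at hlt
      exact hnotIoo (-z) h ⟨by linarith, by linarith⟩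
  have hUa : ∀ z ∈ UU, z ≤ a := by
    rintro z ⟨hz0, hz⟩
    rcases hz with h | h
    · exact (haIcc h).2
    · have := (haIcc h).1
      linarith
  have hUne : UU.Nonempty := by
    obtain ⟨t₀, ht₀⟩ := hne
    rcases lt_trichotomy t₀ 0 with h | h | h
    · exact ⟨-t₀, by constructor; · linarith
                     · right; simpa⟩
    · exact absurd (h ▸ ht₀) hT0
    · exact ⟨t₀, ⟨h, Or.inl ht₀⟩⟩
  obtain ⟨z₀, hz₀⟩ := hUne
  have ha : 0 < a := lt_of_lt_of_le (lt_of_lt_of_le hε (hUε z₀ hz₀)) (hUa z₀ hz₀)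
  set SR : Set ℝ := (fun q : ℚ => (q : ℝ)) '' UU with hSR
  have hSRne : SR.Nonempty := ⟨(z₀ : ℝ), ⟨z₀, hz₀, rfl⟩⟩
  have hbddA : BddAbove SR := by
    refine ⟨(a : ℝ), ?_⟩
    rintro x ⟨q, hq, rfl⟩
    show (q : ℝ) ≤ (a : ℝ)
    exact_mod_cast hUa q hq
  have hbddB : BddBelow SR := by
    refine ⟨(ε : ℝ), ?_⟩
    rintro x ⟨q, hq, rfl⟩
    show (ε : ℝ) ≤ (q : ℝ)
    exact_mod_cast hUε q hq
  set σ : ℝ := sSup SR with hσdef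
  set ι : ℝ := sInf SR with hιdef
  have hub : ∀ z ∈ UU, (z : ℝ) ≤ σ := fun z hz => le_csSup hbddA ⟨z, hz, rfl⟩
  have hlb : ∀ z ∈ UU, ι ≤ (z : ℝ) := fun z hz => csInf_le hbddB ⟨z, hz, rfl⟩
  have hσa : σ ≤ (a : ℝ) := csSup_le hSRne (by
    rintro x ⟨q, hq, rfl⟩
    show (q : ℝ) ≤ (a : ℝ)
    exact_mod_cast hUa q hq)
  have hιε : (ε : ℝ) ≤ ι := le_csInf hSRne (by
    rintro x ⟨q, hq, rfl⟩
    show (ε : ℝ) ≤ (q : ℝ)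
    exact_mod_cast hUε q hq)
  have hι0 : (0 : ℝ) < ι := lt_of_lt_of_le (by exact_mod_cast hε) hιε
  have hισ : ι ≤ σ := le_trans (hlb z₀ hz₀) (hub z₀ hz₀)
  have hσ0 : (0 : ℝ) < σ := lt_of_lt_of_le hι0 hισ
  have hιa : ι ≤ (a : ℝ) := le_trans hισ hσa
  have hex_sup : ∀ r : ℝ, r < σ → ∃ z ∈ UU, r < (z : ℝ) := by
    intro r hr
    obtain ⟨x, hx, hrx⟩ := exists_lt_of_lt_csSup hSRne hr
    obtain ⟨q, hq, rfl⟩ := hx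
    exact ⟨q, hq, hrx⟩
  have hex_inf : ∀ r : ℝ, ι < r → ∃ z ∈ UU, (z : ℝ) < r := by
    intro r hr
    obtain ⟨x, hx, hrx⟩ := exists_lt_of_csInf_lt hSRne hr
    obtain ⟨q, hq, rfl⟩ := hx
    exact ⟨q, hq, hrx⟩
  have hApos : ∀ s ∈ A, (0 : ℚ) < s := fun s hs => hs.1
  have hBpos : ∀ s ∈ B, (0 : ℚ) < s := fun s hs => hs.1
  have hprobeA : ∀ s ∈ A, (fun t : ℚ => t) s ∈ T := fun s hs => hs.2
  have hprobeB : ∀ s ∈ B, (fun t : ℚ => -t) s ∈ T := fun s hs => hs.2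
  have hlandA : ∀ s x : ℚ, s ∈ A → x < 0 → x * (fun t : ℚ => t) s ∈ T → (-x) * s ∈ B := by
    intro s x hs hx hxs
    refine ⟨mul_pos (by linarith) hs.1, ?_⟩
    have h : -((-x) * s) = x * s := by ring
    rw [h]
    exact hxs
  have hlandB : ∀ s x : ℚ, s ∈ B → x < 0 → x * (fun t : ℚ => -t) s ∈ T → (-x) * s ∈ A := by
    intro s x hs hx hxs
    refine ⟨mul_pos (by linarith) hs.1, ?_⟩
    have h : (-x) * s = x * (-s) := by ring
    rw [h]
    exact hxs
  obtain ⟨k, g, hgconv, hgT⟩ := stmt10_pieces T hT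
  set gA : Fin k → Set ℚ := fun i => {q | 0 < q ∧ q ∈ g i} with hgA
  set gB : Fin k → Set ℚ := fun i => {q | 0 < q ∧ -q ∈ g i} with hgB
  have hgAconv : ∀ i, ∀ x y z : ℚ, x ∈ gA i → z ∈ gA i → x ≤ y → y ≤ z → y ∈ gA i := by
    intro i x y z hx hz h1 h2
    exact ⟨lt_of_lt_of_le hx.1 h1, hgconv i x y z hx.2 hz.2 h1 h2⟩
  have hgBconv : ∀ i, ∀ x y z : ℚ, x ∈ gB i → z ∈ gB i → x ≤ y → y ≤ z → y ∈ gB i := by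
    intro i x y z hx hz h1 h2
    exact ⟨lt_of_lt_of_le hx.1 h1,
      hgconv i (-z) (-y) (-x) hz.2 hx.2 (neg_le_neg h2) (neg_le_neg h1)⟩
  have hAeq : A = ⋃ i, gA i := by
    ext q
    constructor
    · rintro ⟨h0, hq⟩
      rw [hgT] at hq
      obtain ⟨i, hi⟩ := Set.mem_iUnion.mp hq
      exact Set.mem_iUnion.mpr ⟨i, h0, hi⟩
    · intro hq
      obtain ⟨i, h0, hi⟩ := Set.mem_iUnion.mp hq
      exact ⟨h0, hgT ▸ Set.mem_iUnion.mpr ⟨i, hi⟩⟩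
  have hBeq : B = ⋃ i, gB i := by
    ext q
    constructor
    · rintro ⟨h0, hq⟩
      rw [hgT] at hq
      obtain ⟨i, hi⟩ := Set.mem_iUnion.mp hq
      exact Set.mem_iUnion.mpr ⟨i, h0, hi⟩
    · intro hq
      obtain ⟨i, h0, hi⟩ := Set.mem_iUnion.mp hq
      exact ⟨h0, hgT ▸ Set.mem_iUnion.mpr ⟨i, hi⟩⟩
  -- membership description of the intersection
  have hVmem : ∀ (p : Fin 4 → ℚ), (∀ i, p i ∈ T) → ∀ x : ℚ,
      (x ∈ ⋂ i, scaleSet ((p i)⁻¹) T ↔ ∀ i, x * p i ∈ T) := by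
    intro p hp x
    have hpne : ∀ i, p i ≠ 0 := fun i h0 => hT0 (by rw [← h0]; exact hp i)
    simp only [Set.mem_iInter, scaleSet, Set.mem_image]
    constructor
    · intro h i
      obtain ⟨s, hs, hxs⟩ := h i
      have hx' : x * p i = s := by
        rw [← hxs]
        field_simp
        exact mul_div_cancel_left₀ s (hpne i)
      rw [hx']
      exact hs
    · intro h i
      refine ⟨x * p i, h i, ?_⟩
      field_simp
      exact mul_div_cancel_left₀ x (hpne i)

  -- main dichotomy
  have main : (KillStmt T) ∨ (∃ u' v' : ℚ, (u' ∈ A ∧ u' ∈ B) ∧ (v' ∈ A ∧ v' ∈ B) ∧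
      (∀ z ∈ UU, z < u' * (1 + δ)) ∧ (∀ z ∈ UU, v' < z * (1 + δ))) := by
    by_cases hTMh : ∀ γ : ℚ, 0 < γ → ∃ w, (w ∈ A ∧ w ∈ B) ∧ ∀ z ∈ UU, z < w * (1 + γ)
    · by_cases hBMh : ∀ γ : ℚ, 0 < γ → ∃ w, (w ∈ A ∧ w ∈ B) ∧ ∀ z ∈ UU, w < z * (1 + γ)
      · right
        obtain ⟨u', hu'AB, hu'⟩ := hTMh δ hδ
        obtain ⟨v', hv'AB, hv'⟩ := hBMh δ hδ
        exact ⟨u', v', hu'AB, hv'AB, hu', hv'⟩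
      · -- kill at the bottom
        left
        by_cases hAι : ∀ γ : ℚ, 0 < γ → ∃ w, w ∈ A ∧ ι < (w : ℝ) ∧ (w : ℝ) < ι + γ
        · by_cases hBι : ∀ γ : ℚ, 0 < γ → ∃ w, w ∈ B ∧ ι < (w : ℝ) ∧ (w : ℝ) < ι + γ
          · exfalso
            apply hBMh
            obtain ⟨wA, hwAA, hwAι, habsA⟩ := stmt10_absorb_bot hgAconv hAeq hAι
            obtain ⟨wB, hwBB, hwBι, habsB⟩ := stmt10_absorb_bot hgBconv hBeq hBι
            intro γ hγ
            have hγR : (0:ℝ) < (γ:ℝ) := by exact_mod_cast hγ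
            have hL : ι < min (min (wA:ℝ) (wB:ℝ)) (ι * (1 + (γ:ℝ))) := by
              refine lt_min (lt_min hwAι hwBι) ?_
              have h := mul_lt_mul_of_pos_left (show (1:ℝ) < 1 + (γ:ℝ) by linarith) hι0
              rwa [mul_one] at h
            obtain ⟨w, hw1, hw2⟩ := exists_rat_btwn hL
            have hwA' : w ≤ wA := by
              have h : (w:ℝ) < (wA:ℝ) :=
                lt_of_lt_of_le hw2 (le_trans (min_le_left _ _) (min_le_left _ _))
              exact_mod_cast h.le
            have hwB' : w ≤ wB := by
              have h : (w:ℝ) < (wB:ℝ) :=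
                lt_of_lt_of_le hw2 (le_trans (min_le_left _ _) (min_le_right _ _))
              exact_mod_cast h.le
            refine ⟨w, ⟨habsA w hwA' hw1, habsB w hwB' hw1⟩, ?_⟩
            intro z hz
            have h2 : (w:ℝ) < ι * (1 + (γ:ℝ)) := lt_of_lt_of_le hw2 (min_le_right _ _)
            have h3 : ι * (1 + (γ:ℝ)) ≤ (z:ℝ) * (1 + (γ:ℝ)) :=
              mul_le_mul_of_nonneg_right (hlb z hz) (by linarith)
            have h4 : (w:ℝ) < ((z * (1 + γ) : ℚ) : ℝ) := by push_cast; linarith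
            exact_mod_cast h4
          · push_neg at hBι
            obtain ⟨γ₁, hγ₁, hBgap'⟩ := hBι
            have hγ₁R : (0:ℝ) < (γ₁:ℝ) := by exact_mod_cast hγ₁
            have hBgap : ∀ w ∈ B, ι + γ₁ ≤ (w:ℝ) ∨ (w:ℝ) = ι := by
              intro w hw
              rcases (hlb w (hBUU w hw)).lt_or_eq with h | h
              · exact Or.inl (hBgap' w hw h)
              · exact Or.inr h.symm
            by_cases hιB : ∃ w ∈ B, (w:ℝ) = ι
            · obtain ⟨w₀, hw₀B, hw₀ι⟩ := hιB
              by_cases hιA : ∃ w ∈ A, (w:ℝ) = ι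
              · exfalso
                apply hBMh
                obtain ⟨w₁, hw₁A, hw₁ι⟩ := hιA
                have hww : w₀ = w₁ := by
                  have h : (w₀:ℝ) = (w₁:ℝ) := hw₀ι.trans hw₁ι.symm
                  exact_mod_cast h
                intro γ hγ
                refine ⟨w₁, ⟨hw₁A, hww ▸ hw₀B⟩, ?_⟩
                intro z hz
                have hz1 : (w₁:ℝ) ≤ (z:ℝ) := hw₁ι ▸ hlb z hz
                have hz2 : w₁ ≤ z := by exact_mod_cast hz1
                have h5 : z * (1 + γ) = z + z * γ := by ring
                linarith [mul_pos hz.1 hγ]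
              · obtain ⟨s, hsA, hsl, hsu⟩ := hAι (γ₁/2) (by positivity)
                refine stmt10_double_bot T a ha ι hιa hι0 B A (fun t => -t) (fun t => t)
                  hBpos hApos hprobeB hprobeA hlandB hlandA γ₁ hγ₁ hBgap w₀ hw₀B hw₀ι
                  hιA (fun w hw => hlb w (hAUU w hw)) s hsA ?_ hsl
                push_cast at hsu ⊢
                linarith
            · obtain ⟨s, hsA, hsl, hsu⟩ := hAι (γ₁/2) (by positivity)
              refine stmt10_single_bot T a ha ι hιa hι0 A B (fun t => t) hApos hprobeA hlandA
                γ₁ hγ₁ hBgap hιB s hsA ?_ hsl.le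
              push_cast at hsu ⊢
              linarith
        · push_neg at hAι
          obtain ⟨γ₁, hγ₁, hAgap'⟩ := hAι
          have hγ₁R : (0:ℝ) < (γ₁:ℝ) := by exact_mod_cast hγ₁
          have hAgap : ∀ w ∈ A, ι + γ₁ ≤ (w:ℝ) ∨ (w:ℝ) = ι := by
            intro w hw
            rcases (hlb w (hAUU w hw)).lt_or_eq with h | h
            · exact Or.inl (hAgap' w hw h)
            · exact Or.inr h.symm
          by_cases hBι : ∀ γ : ℚ, 0 < γ → ∃ w, w ∈ B ∧ ι < (w : ℝ) ∧ (w : ℝ) < ι + γ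
          · by_cases hιA : ∃ w ∈ A, (w:ℝ) = ι
            · by_cases hιB : ∃ w ∈ B, (w:ℝ) = ι
              · exfalso
                apply hBMh
                obtain ⟨w₁, hw₁A, hw₁ι⟩ := hιA
                obtain ⟨w₀, hw₀B, hw₀ι⟩ := hιB
                have hww : w₀ = w₁ := by
                  have h : (w₀:ℝ) = (w₁:ℝ) := hw₀ι.trans hw₁ι.symm
                  exact_mod_cast h
                intro γ hγ
                refine ⟨w₁, ⟨hw₁A, hww ▸ hw₀B⟩, ?_⟩
                intro z hz
                have hz1 : (w₁:ℝ) ≤ (z:ℝ) := hw₁ι ▸ hlb z hz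
                have hz2 : w₁ ≤ z := by exact_mod_cast hz1
                have h5 : z * (1 + γ) = z + z * γ := by ring
                linarith [mul_pos hz.1 hγ]
              · obtain ⟨w₀, hw₀A, hw₀ι⟩ := hιA
                obtain ⟨s, hsB, hsl, hsu⟩ := hBι (γ₁/2) (by positivity)
                refine stmt10_double_bot T a ha ι hιa hι0 A B (fun t => t) (fun t => -t)
                  hApos hBpos hprobeA hprobeB hlandA hlandB γ₁ hγ₁ hAgap w₀ hw₀A hw₀ι
                  hιB (fun w hw => hlb w (hBUU w hw)) s hsB ?_ hsl
                push_cast at hsu ⊢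
                linarith
            · obtain ⟨s, hsB, hsl, hsu⟩ := hBι (γ₁/2) (by positivity)
              refine stmt10_single_bot T a ha ι hιa hι0 B A (fun t => -t) hBpos hprobeB hlandB
                γ₁ hγ₁ hAgap hιA s hsB ?_ hsl.le
              push_cast at hsu ⊢
              linarith
          · push_neg at hBι
            obtain ⟨γ₂, hγ₂, hBgap'⟩ := hBι
            have hγ₂R : (0:ℝ) < (γ₂:ℝ) := by exact_mod_cast hγ₂
            have hBgap : ∀ w ∈ B, ι + γ₂ ≤ (w:ℝ) ∨ (w:ℝ) = ι := by
              intro w hw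
              rcases (hlb w (hBUU w hw)).lt_or_eq with h | h
              · exact Or.inl (hBgap' w hw h)
              · exact Or.inr h.symm
            by_cases hιA : ∃ w ∈ A, (w:ℝ) = ι
            · by_cases hιB : ∃ w ∈ B, (w:ℝ) = ι
              · exfalso
                apply hBMh
                obtain ⟨w₁, hw₁A, hw₁ι⟩ := hιA
                obtain ⟨w₀, hw₀B, hw₀ι⟩ := hιB
                have hww : w₀ = w₁ := by
                  have h : (w₀:ℝ) = (w₁:ℝ) := hw₀ι.trans hw₁ι.symm
                  exact_mod_cast h
                intro γ hγ
                refine ⟨w₁, ⟨hw₁A, hww ▸ hw₀B⟩, ?_⟩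
                intro z hz
                have hz1 : (w₁:ℝ) ≤ (z:ℝ) := hw₁ι ▸ hlb z hz
                have hz2 : w₁ ≤ z := by exact_mod_cast hz1
                have h5 : z * (1 + γ) = z + z * γ := by ring
                linarith [mul_pos hz.1 hγ]
              · obtain ⟨w₀, hw₀A, hw₀ι⟩ := hιA
                refine stmt10_single_bot T a ha ι hιa hι0 A B (fun t => t) hApos hprobeA hlandA
                  γ₂ hγ₂ hBgap hιB w₀ hw₀A ?_ (le_of_eq hw₀ι.symm)
                rw [hw₀ι]
                linarith
            · by_cases hιB : ∃ w ∈ B, (w:ℝ) = ι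
              · obtain ⟨w₀, hw₀B, hw₀ι⟩ := hιB
                refine stmt10_single_bot T a ha ι hιa hι0 B A (fun t => -t) hBpos hprobeB hlandB
                  γ₁ hγ₁ hAgap hιA w₀ hw₀B ?_ (le_of_eq hw₀ι.symm)
                rw [hw₀ι]
                linarith
              · exfalso
                have hmin : (0:ℝ) < min (γ₁:ℝ) (γ₂:ℝ) := lt_min hγ₁R hγ₂R
                obtain ⟨z, hz, hz1⟩ := hex_inf (ι + min (γ₁:ℝ) (γ₂:ℝ)) (by linarith)
                rcases hz.2 with h | h
                · have hzA : z ∈ A := ⟨hz.1, h⟩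
                  rcases hAgap z hzA with h' | h'
                  · have := min_le_left (γ₁:ℝ) (γ₂:ℝ)
                    linarith
                  · exact hιA ⟨z, hzA, h'⟩
                · have hzB : z ∈ B := ⟨hz.1, h⟩
                  rcases hBgap z hzB with h' | h'
                  · have := min_le_right (γ₁:ℝ) (γ₂:ℝ)
                    linarith
                  · exact hιB ⟨z, hzB, h'⟩
    · -- kill at the top
      left
      by_cases hAσ : ∀ γ : ℚ, 0 < γ → ∃ w, w ∈ A ∧ σ - γ < (w : ℝ) ∧ (w : ℝ) < σ
      · by_cases hBσ : ∀ γ : ℚ, 0 < γ → ∃ w, w ∈ B ∧ σ - γ < (w : ℝ) ∧ (w : ℝ) < σ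
        · exfalso
          apply hTMh
          obtain ⟨wA, hwAA, hwAσ, habsA⟩ := stmt10_absorb_top hgAconv hAeq hAσ
          obtain ⟨wB, hwBB, hwBσ, habsB⟩ := stmt10_absorb_top hgBconv hBeq hBσ
          intro γ hγ
          have hγR : (0:ℝ) < (γ:ℝ) := by exact_mod_cast hγ
          have hL : max (max (wA:ℝ) (wB:ℝ)) (σ / (1 + (γ:ℝ))) < σ := by
            refine max_lt (max_lt hwAσ hwBσ) ?_
            exact div_lt_self hσ0 (by linarith)
          obtain ⟨w, hw1, hw2⟩ := exists_rat_btwn hL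
          have hwA' : wA ≤ w := by
            have h : (wA:ℝ) < (w:ℝ) :=
              lt_of_le_of_lt (le_trans (le_max_left _ _) (le_max_left _ _)) hw1
            exact_mod_cast h.le
          have hwB' : wB ≤ w := by
            have h : (wB:ℝ) < (w:ℝ) :=
              lt_of_le_of_lt (le_trans (le_max_right _ _) (le_max_left _ _)) hw1
            exact_mod_cast h.le
          refine ⟨w, ⟨habsA w hwA' hw2, habsB w hwB' hw2⟩, ?_⟩
          intro z hz
          have h2 : σ / (1 + (γ:ℝ)) < (w:ℝ) := lt_of_le_of_lt (le_max_right _ _) hw1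
          have h3 : σ < (w:ℝ) * (1 + (γ:ℝ)) := (div_lt_iff₀ (by linarith)).mp h2
          have h4 : (z:ℝ) < ((w * (1 + γ) : ℚ) : ℝ) := by push_cast; linarith [hub z hz]
          exact_mod_cast h4
        · push_neg at hBσ
          obtain ⟨γ₁, hγ₁, hBgap'⟩ := hBσ
          have hγ₁R : (0:ℝ) < (γ₁:ℝ) := by exact_mod_cast hγ₁
          have hBgap : ∀ w ∈ B, (w:ℝ) ≤ σ - γ₁ ∨ (w:ℝ) = σ := by
            intro w hw
            rcases le_or_gt ((w:ℝ)) (σ - γ₁) with h | h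
            · exact Or.inl h
            · exact Or.inr (le_antisymm (hub w (hBUU w hw)) (hBgap' w hw h))
          by_cases hσB : ∃ w ∈ B, (w:ℝ) = σ
          · obtain ⟨w₀, hw₀B, hw₀σ⟩ := hσB
            by_cases hσA : ∃ w ∈ A, (w:ℝ) = σ
            · exfalso
              apply hTMh
              obtain ⟨w₁, hw₁A, hw₁σ⟩ := hσA
              have hww : w₀ = w₁ := by
                have h : (w₀:ℝ) = (w₁:ℝ) := hw₀σ.trans hw₁σ.symm
                exact_mod_cast h
              intro γ hγ
              refine ⟨w₁, ⟨hw₁A, hww ▸ hw₀B⟩, ?_⟩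
              intro z hz
              have hz1 : (z:ℝ) ≤ (w₁:ℝ) := hw₁σ ▸ hub z hz
              have hz2 : z ≤ w₁ := by exact_mod_cast hz1
              have h5 : w₁ * (1 + γ) = w₁ + w₁ * γ := by ring
              linarith [mul_pos hw₁A.1 hγ]
            · obtain ⟨s, hsA, hsl, hsu⟩ := hAσ (γ₁/2) (by positivity)
              refine stmt10_double_top T a ha σ hσa B A (fun t => -t) (fun t => t)
                hBpos hApos hprobeB hprobeA hlandB hlandA γ₁ hγ₁ hBgap w₀ hw₀B hw₀σ
                hσA (fun w hw => hub w (hAUU w hw)) s hsA ?_ hsu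
              push_cast at hsl ⊢
              linarith
          · obtain ⟨s, hsA, hsl, hsu⟩ := hAσ (γ₁/2) (by positivity)
            refine stmt10_single_top T a ha σ hσa A B (fun t => t) hApos hprobeA hlandA
              γ₁ hγ₁ hBgap hσB s hsA ?_ hsu.le
            push_cast at hsl ⊢
            linarith
      · push_neg at hAσ
        obtain ⟨γ₁, hγ₁, hAgap'⟩ := hAσ
        have hγ₁R : (0:ℝ) < (γ₁:ℝ) := by exact_mod_cast hγ₁
        have hAgap : ∀ w ∈ A, (w:ℝ) ≤ σ - γ₁ ∨ (w:ℝ) = σ := by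
          intro w hw
          rcases le_or_gt ((w:ℝ)) (σ - γ₁) with h | h
          · exact Or.inl h
          · exact Or.inr (le_antisymm (hub w (hAUU w hw)) (hAgap' w hw h))
        by_cases hBσ : ∀ γ : ℚ, 0 < γ → ∃ w, w ∈ B ∧ σ - γ < (w : ℝ) ∧ (w : ℝ) < σ
        · by_cases hσA : ∃ w ∈ A, (w:ℝ) = σ
          · by_cases hσB : ∃ w ∈ B, (w:ℝ) = σ
            · exfalso
              apply hTMh
              obtain ⟨w₁, hw₁A, hw₁σ⟩ := hσA
              obtain ⟨w₀, hw₀B, hw₀σ⟩ := hσB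
              have hww : w₀ = w₁ := by
                have h : (w₀:ℝ) = (w₁:ℝ) := hw₀σ.trans hw₁σ.symm
                exact_mod_cast h
              intro γ hγ
              refine ⟨w₁, ⟨hw₁A, hww ▸ hw₀B⟩, ?_⟩
              intro z hz
              have hz1 : (z:ℝ) ≤ (w₁:ℝ) := hw₁σ ▸ hub z hz
              have hz2 : z ≤ w₁ := by exact_mod_cast hz1
              have h5 : w₁ * (1 + γ) = w₁ + w₁ * γ := by ring
              linarith [mul_pos hw₁A.1 hγ]
            · obtain ⟨w₀, hw₀A, hw₀σ⟩ := hσA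
              obtain ⟨s, hsB, hsl, hsu⟩ := hBσ (γ₁/2) (by positivity)
              refine stmt10_double_top T a ha σ hσa A B (fun t => t) (fun t => -t)
                hApos hBpos hprobeA hprobeB hlandA hlandB γ₁ hγ₁ hAgap w₀ hw₀A hw₀σ
                hσB (fun w hw => hub w (hBUU w hw)) s hsB ?_ hsu
              push_cast at hsl ⊢
              linarith
          · obtain ⟨s, hsB, hsl, hsu⟩ := hBσ (γ₁/2) (by positivity)
            refine stmt10_single_top T a ha σ hσa B A (fun t => -t) hBpos hprobeB hlandB
              γ₁ hγ₁ hAgap hσA s hsB ?_ hsu.le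
            push_cast at hsl ⊢
            linarith
        · push_neg at hBσ
          obtain ⟨γ₂, hγ₂, hBgap'⟩ := hBσ
          have hγ₂R : (0:ℝ) < (γ₂:ℝ) := by exact_mod_cast hγ₂
          have hBgap : ∀ w ∈ B, (w:ℝ) ≤ σ - γ₂ ∨ (w:ℝ) = σ := by
            intro w hw
            rcases le_or_gt ((w:ℝ)) (σ - γ₂) with h | h
            · exact Or.inl h
            · exact Or.inr (le_antisymm (hub w (hBUU w hw)) (hBgap' w hw h))
          by_cases hσA : ∃ w ∈ A, (w:ℝ) = σ
          · by_cases hσB : ∃ w ∈ B, (w:ℝ) = σ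
            · exfalso
              apply hTMh
              obtain ⟨w₁, hw₁A, hw₁σ⟩ := hσA
              obtain ⟨w₀, hw₀B, hw₀σ⟩ := hσB
              have hww : w₀ = w₁ := by
                have h : (w₀:ℝ) = (w₁:ℝ) := hw₀σ.trans hw₁σ.symm
                exact_mod_cast h
              intro γ hγ
              refine ⟨w₁, ⟨hw₁A, hww ▸ hw₀B⟩, ?_⟩
              intro z hz
              have hz1 : (z:ℝ) ≤ (w₁:ℝ) := hw₁σ ▸ hub z hz
              have hz2 : z ≤ w₁ := by exact_mod_cast hz1
              have h5 : w₁ * (1 + γ) = w₁ + w₁ * γ := by ring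
              linarith [mul_pos hw₁A.1 hγ]
            · obtain ⟨w₀, hw₀A, hw₀σ⟩ := hσA
              refine stmt10_single_top T a ha σ hσa A B (fun t => t) hApos hprobeA hlandA
                γ₂ hγ₂ hBgap hσB w₀ hw₀A ?_ (le_of_eq hw₀σ)
              rw [hw₀σ]
              linarith
          · by_cases hσB : ∃ w ∈ B, (w:ℝ) = σ
            · obtain ⟨w₀, hw₀B, hw₀σ⟩ := hσB
              refine stmt10_single_top T a ha σ hσa B A (fun t => -t) hBpos hprobeB hlandB
                γ₁ hγ₁ hAgap hσA w₀ hw₀B ?_ (le_of_eq hw₀σ)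
              rw [hw₀σ]
              linarith
            · exfalso
              have hmin : (0:ℝ) < min (γ₁:ℝ) (γ₂:ℝ) := lt_min hγ₁R hγ₂R
              obtain ⟨z, hz, hz1⟩ := hex_sup (σ - min (γ₁:ℝ) (γ₂:ℝ)) (by linarith)
              rcases hz.2 with h | h
              · have hzA : z ∈ A := ⟨hz.1, h⟩
                rcases hAgap z hzA with h' | h'
                · have := min_le_left (γ₁:ℝ) (γ₂:ℝ)
                  linarith
                · exact hσA ⟨z, hzA, h'⟩
              · have hzB : z ∈ B := ⟨hz.1, h⟩
                rcases hBgap z hzB with h' | h'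
                · have := min_le_right (γ₁:ℝ) (γ₂:ℝ)
                  linarith
                · exact hσB ⟨z, hzB, h'⟩
  -- now finish
  rcases main with hkill | hsym
  · obtain ⟨d₀, hd₀, t₁, t₂, ht₁, ht₂, hkillf⟩ := hkill
    set δ' : ℚ := min d₀ δ with hδ'def
    have hδ'0 : 0 < δ' := lt_min hd₀ hδ
    have hδ'δ : δ' ≤ δ := min_le_right _ _
    have hδ'd : δ' ≤ d₀ := min_le_left _ _
    have hδ'R : (0:ℝ) < (δ':ℝ) := by exact_mod_cast hδ'0
    have h1δ' : (1:ℝ) < 1 + (δ':ℝ) := by linarith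
    obtain ⟨u, hu, huσ⟩ := hex_sup (σ / (1 + (δ':ℝ))) (div_lt_self hσ0 h1δ')
    have huσ' : σ < (u:ℝ) * (1 + (δ':ℝ)) := (div_lt_iff₀ (by linarith)).mp huσ
    have hu_all : ∀ z ∈ UU, z < (1 + δ') * u := by
      intro z hz
      have h4 : (z:ℝ) < (((1 + δ') * u : ℚ):ℝ) := by
        push_cast
        rw [mul_comm]
        linarith [hub z hz]
      exact_mod_cast h4
    have hιδ' : ι < ι * (1 + (δ':ℝ)) := by
      have h := mul_lt_mul_of_pos_left h1δ' hι0
      rwa [mul_one] at h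
    obtain ⟨v, hv, hvι⟩ := hex_inf (ι * (1 + (δ':ℝ))) hιδ'
    have hv_all : ∀ z ∈ UU, v < (1 + δ') * z := by
      intro z hz
      have h3 : ι * (1 + (δ':ℝ)) ≤ (z:ℝ) * (1 + (δ':ℝ)) :=
        mul_le_mul_of_nonneg_right (hlb z hz) (by linarith)
      have h4 : (v:ℝ) < (((1 + δ') * z : ℚ):ℝ) := by
        push_cast
        linarith
      exact_mod_cast h4
    have hmag : ∀ z : ℚ, z ∈ UU → ∃ t, t ∈ T ∧ ∀ x : ℚ, x ≠ 0 → x * t ∈ T → |x| * z ∈ UU := by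
      intro z hz
      have hz0 : 0 < z := hz.1
      rcases hz.2 with hzT | hzT
      · refine ⟨z, hzT, ?_⟩
        intro x hx hxt
        have habs : 0 < |x| := abs_pos.mpr hx
        refine ⟨mul_pos habs hz0, ?_⟩
        rcases hx.lt_or_gt with hneg | hpos
        · right
          have h : -(|x| * z) = x * z := by rw [abs_of_neg hneg]; ring
          rw [h]
          exact hxt
        · left
          have h : |x| * z = x * z := by rw [abs_of_pos hpos]
          rw [h]
          exact hxt
      · refine ⟨-z, hzT, ?_⟩
        intro x hx hxt
        have habs : 0 < |x| := abs_pos.mpr hx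
        refine ⟨mul_pos habs hz0, ?_⟩
        rcases hx.lt_or_gt with hneg | hpos
        · left
          have h : |x| * z = x * (-z) := by rw [abs_of_neg hneg]; ring
          rw [h]
          exact hxt
        · right
          have h : -(|x| * z) = x * (-z) := by rw [abs_of_pos hpos]; ring
          rw [h]
          exact hxt
    obtain ⟨tu, htuT, htu⟩ := hmag u hu
    obtain ⟨tv, htvT, htv⟩ := hmag v hv
    have hp : ∀ i : Fin 4, (![tu, tv, t₁, t₂] : Fin 4 → ℚ) i ∈ T := by
      intro i
      fin_cases i
      · exact htuT
      · exact htvT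
      · exact ht₁
      · exact ht₂
    refine ⟨4, fun i => ((![tu, tv, t₁, t₂] : Fin 4 → ℚ) i)⁻¹, ?_, Or.inl ⟨?_, ?_⟩⟩
    · intro i
      exact inv_ne_zero (fun h0 => hT0 (by rw [← h0]; exact hp i))
    · refine (hVmem _ hp 1).mpr ?_
      intro i
      rw [one_mul]
      exact hp i
    · intro x hxV
      have hx := (hVmem _ hp x).mp hxV
      have hx0 : x ≠ 0 := by
        intro h0
        apply hT0
        have h1 := hx 0
        rw [h0, zero_mul] at h1
        exact h1
      have hmu : |x| * u ∈ UU := htu x hx0 (hx 0)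
      have hmv : |x| * v ∈ UU := htv x hx0 (hx 1)
      have hu0 : 0 < u := hu.1
      have hv0 : 0 < v := hv.1
      have habs_lt : |x| < 1 + δ' := (mul_lt_mul_iff_left₀ hu0).mp (hu_all _ hmu)
      have habs_gt : 1 < |x| * (1 + δ') := by
        have h := hv_all _ hmv
        have he : (1 + δ') * (|x| * v) = (|x| * (1 + δ')) * v := by ring
        rw [he] at h
        by_contra hc
        push_neg at hc
        have h2 := mul_le_mul_of_nonneg_right hc hv0.le
        rw [one_mul] at h2
        linarith
      rcases hx0.lt_or_gt with hneg | hpos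
      · exfalso
        refine hkillf x hneg ?_ ?_ (hx 2) (hx 3)
        · have hax : -x = |x| := (abs_of_neg hneg).symm
          rw [hax]
          have h2 : |x| * (1 + δ') ≤ |x| * (1 + d₀) :=
            mul_le_mul_of_nonneg_left (by linarith) (abs_nonneg x)
          linarith
        · have hax : -x = |x| := (abs_of_neg hneg).symm
          rw [hax]
          linarith
      · rw [Set.mem_Ioo]
        have hax : |x| = x := abs_of_pos hpos
        rw [hax] at habs_lt habs_gt
        constructor
        · by_contra hc
          push_neg at hc
          have h1 : x * (1 + δ') ≤ (1 - δ) * (1 + δ') :=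
            mul_le_mul_of_nonneg_right hc (by linarith)
          have h2 : (1 - δ) * (1 + δ') = 1 + δ' - δ - δ * δ' := by ring
          have h3 : 0 ≤ δ * δ' := mul_nonneg hδ.le hδ'0.le
          linarith
        · linarith
  · obtain ⟨u', v', ⟨hu'A, hu'B⟩, ⟨hv'A, hv'B⟩, hu'bd, hv'bd⟩ := hsym
    have hp : ∀ i : Fin 4, (![u', -u', v', -v'] : Fin 4 → ℚ) i ∈ T := by
      intro i
      fin_cases i
      · exact hu'A.2
      · exact hu'B.2
      · exact hv'A.2
      · exact hv'B.2
    refine ⟨4, fun i => ((![u', -u', v', -v'] : Fin 4 → ℚ) i)⁻¹, ?_, Or.inr ⟨?_, ?_⟩⟩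
    · intro i
      exact inv_ne_zero (fun h0 => hT0 (by rw [← h0]; exact hp i))
    · intro zz hzz
      simp only [Set.mem_insert_iff, Set.mem_singleton_iff] at hzz
      refine (hVmem _ hp zz).mpr ?_
      rcases hzz with rfl | rfl
      · intro i
        fin_cases i
        · show (-1 : ℚ) * u' ∈ T
          rw [neg_one_mul]
          exact hu'B.2
        · show (-1 : ℚ) * (-u') ∈ T
          rw [neg_one_mul, neg_neg]
          exact hu'A.2
        · show (-1 : ℚ) * v' ∈ T
          rw [neg_one_mul]
          exact hv'B.2
        · show (-1 : ℚ) * (-v') ∈ T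
          rw [neg_one_mul, neg_neg]
          exact hv'A.2
      · intro i
        rw [one_mul]
        exact hp i
    · intro x hxV
      have hx := (hVmem _ hp x).mp hxV
      have hx0 : x ≠ 0 := by
        intro h0
        apply hT0
        have h1 := hx 0
        rw [h0, zero_mul] at h1
        exact h1
      have hu'0 : 0 < u' := hu'A.1
      have hv'0 : 0 < v' := hv'A.1
      have habsx : 0 < |x| := abs_pos.mpr hx0
      have hmu : |x| * u' ∈ UU := by
        refine ⟨mul_pos habsx hu'0, Or.inl ?_⟩
        rcases hx0.lt_or_gt with hneg | hpos
        · have h : |x| * u' = x * (-u') := by rw [abs_of_neg hneg]; ring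
          rw [h]
          exact hx 1
        · have h : |x| * u' = x * u' := by rw [abs_of_pos hpos]
          rw [h]
          exact hx 0
      have hmv : |x| * v' ∈ UU := by
        refine ⟨mul_pos habsx hv'0, Or.inl ?_⟩
        rcases hx0.lt_or_gt with hneg | hpos
        · have h : |x| * v' = x * (-v') := by rw [abs_of_neg hneg]; ring
          rw [h]
          exact hx 3
        · have h : |x| * v' = x * v' := by rw [abs_of_pos hpos]
          rw [h]
          exact hx 2
      have habs_lt : |x| < 1 + δ := by
        have h := hu'bd _ hmu
        have he : u' * (1 + δ) = (1 + δ) * u' := by ring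
        rw [he] at h
        exact (mul_lt_mul_iff_left₀ hu'0).mp h
      have habs_gt : 1 < |x| * (1 + δ) := by
        have h := hv'bd _ hmv
        have he : (|x| * v') * (1 + δ) = (|x| * (1 + δ)) * v' := by ring
        rw [he] at h
        by_contra hc
        push_neg at hc
        have h2 := mul_le_mul_of_nonneg_right hc hv'0.le
        rw [one_mul] at h2
        linarith
      rcases hx0.lt_or_gt with hneg | hpos
      · left
        rw [Set.mem_Ioo]
        have hax : |x| = -x := abs_of_neg hneg
        rw [hax] at habs_lt habs_gt
        constructor
        · linarith
        · by_contra hc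
          push_neg at hc
          have hc2 : -x ≤ 1 - δ := by linarith
          have h1 : (-x) * (1 + δ) ≤ (1 - δ) * (1 + δ) :=
            mul_le_mul_of_nonneg_right hc2 (by linarith)
          have h2 : (1 - δ) * (1 + δ) = 1 - δ * δ := by ring
          have h3 : 0 ≤ δ * δ := mul_nonneg hδ.le hδ.le
          linarith
      · right
        rw [Set.mem_Ioo]
        have hax : |x| = x := abs_of_pos hpos
        rw [hax] at habs_lt habs_gt
        constructor
        · by_contra hc
          push_neg at hc
          have h1 : x * (1 + δ) ≤ (1 - δ) * (1 + δ) :=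
            mul_le_mul_of_nonneg_right hc (by linarith)
          have h2 : (1 - δ) * (1 + δ) = 1 - δ * δ := by ring
          have h3 : 0 ≤ δ * δ := mul_nonneg hδ.le hδ.le
          linarith
        · linarith
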